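/- Let f be a quasi-convex function on a normed vector space E with minimizer x* and optimal value f* = f(x*). Suppose at a point x a nonzero vector g satisfies: for all y, ⟨g, y - x⟩ ≥ 0 implies f(y) ≥ f(x). Let d be a unit vector with ⟨g, d⟩ > 0, and define the directional proximity measure δ = ⟨g, x - x*⟩ / ⟨g, d⟩ ≥ 0. Define μ(r) = sup { f(y) - f* : ‖y - x*‖ ≤ r }. Then f(x) - f* ≤ μ(δ). -/

import Mathlib

/-- Directional proximity measure bound for quasi-convex minimization:
`f(x) - f* ≤ μ(δ)` where `δ = ⟨g, x - x*⟩ / ⟨g, d⟩`. -/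
theorem stmt_0 {E : Type*} [NormedAddCommGroup E] [InnerProductSpace ℝ E]
    (f : E → ℝ) (xstar x g d : E) (hg : g ≠ 0)
    (hmin : ∀ y : E, f xstar ≤ f y)
    (hquasi : ∀ y : E, (0:ℝ) ≤ inner ℝ g (y - x) → f x ≤ f y)
    (hd : ‖d‖ = 1) (hgd : (0:ℝ) < inner ℝ g d)
    (μ : ℝ → ℝ)
    (hμ : ∀ r : ℝ, μ r = sSup {t : ℝ | ∃ y : E, ‖y - xstar‖ ≤ r ∧ t = f y - f xstar})
    (hbdd : BddAbove {t : ℝ | ∃ y : E,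
      ‖y - xstar‖ ≤ (inner ℝ g (x - xstar) : ℝ) / (inner ℝ g d : ℝ) ∧ t = f y - f xstar}) :
    f x - f xstar ≤ μ ((inner ℝ g (x - xstar) : ℝ) / (inner ℝ g d : ℝ)) := by
  set δ : ℝ := (inner ℝ g (x - xstar) : ℝ) / (inner ℝ g d : ℝ) with hδ
  rw [hμ]
  rcases le_or_gt 0 δ with h0 | h0
  · have hy : f x ≤ f (xstar + δ • d) := by
      apply hquasi
      have : (inner ℝ g (xstar + δ • d - x) : ℝ) = δ * inner ℝ g d - inner ℝ g (x - xstar) := by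
        simp [inner_sub_right, inner_add_right, inner_smul_right]
        ring
      rw [this, hδ, div_mul_cancel₀ _ (ne_of_gt hgd)]
      simp
    have hmem : f (xstar + δ • d) - f xstar ∈
        {t : ℝ | ∃ y : E, ‖y - xstar‖ ≤ δ ∧ t = f y - f xstar} := by
      exact ⟨xstar + δ • d, by simp [norm_smul, abs_of_nonneg h0, hd], rfl⟩
    have := le_csSup hbdd hmem
    linarith
  · -- δ < 0 : then inner ℝ g (xstar - x) > 0, so f x ≤ f xstar, so lhs ≤ 0 = sSup ∅
    have hneg : (inner ℝ g (x - xstar) : ℝ) < 0 := by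
      by_contra h
      push_neg at h
      exact absurd (div_nonneg h hgd.le) (not_le.mpr h0)
    have hfx : f x ≤ f xstar := by
      apply hquasi
      have : (inner ℝ g (xstar - x) : ℝ) = -(inner ℝ g (x - xstar) : ℝ) := by
        rw [← inner_neg_right]; congr 1; abel
      rw [this]; linarith
    have hempty : {t : ℝ | ∃ y : E, ‖y - xstar‖ ≤ δ ∧ t = f y - f xstar} = ∅ := by
      ext t
      simp only [Set.mem_setOf_eq, Set.mem_empty_iff_false, iff_false]
      rintro ⟨y, hy, -⟩
      exact absurd (le_trans (norm_nonneg _) hy) (not_le.mpr h0)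
    rw [hempty, Real.sSup_empty]
    linarith [hmin x]
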